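/- Let S ~ P on R^d and Y = S + Z with Z ~ N(0, \sigma^2 I_d) independent of S. Then for every n, E_{P^{\otimes n}}[\chi^2(\hat{P}_{S^n} * N_\sigma || P * N_\sigma)] = (1/n) I_{\chi^2}(S; Y), where I_{\chi^2}(S;Y) = \chi^2(P_{S,Y} || P_S \otimes P_Y). -/

import Mathlib

open MeasureTheory ProbabilityTheory Real Filter
open scoped ENNReal NNReal RealInnerProductSpace

noncomputable section

abbrev Euc (d : ℕ) := EuclideanSpace ℝ (Fin d)

/-- Density of the isotropic Gaussian `N(0, σ² I_d)`. -/
def gaussDensity (d : ℕ) (σ : ℝ) (x : Euc d) : ℝ :=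
  (2 * π * σ ^ 2) ^ (-(d : ℝ) / 2) * Real.exp (-‖x‖ ^ 2 / (2 * σ ^ 2))

/-- The isotropic Gaussian measure `N(0, σ² I_d)` on `ℝ^d`. -/
def gaussian (d : ℕ) (σ : ℝ) : Measure (Euc d) :=
  volume.withDensity fun x => ENNReal.ofReal (gaussDensity d σ x)

/-- Convolution of two measures on `ℝ^d`. -/
def mconv {d : ℕ} (P Q : Measure (Euc d)) : Measure (Euc d) :=
  (P.prod Q).map fun p => p.1 + p.2

/-- `P` is `K`-subgaussian. -/
def IsSubgaussian {d : ℕ} (P : Measure (Euc d)) (K : ℝ) : Prop :=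
  ∀ α : Euc d, ∫ x, Real.exp (⟪α, x - ∫ y, y ∂P⟫) ∂P ≤ Real.exp (K ^ 2 * ‖α‖ ^ 2 / 2)

/-- Empirical measure of samples `s`. -/
def empMeasure {d n : ℕ} (s : Fin n → Euc d) : Measure (Euc d) :=
  (n : ℝ≥0∞)⁻¹ • ∑ i, Measure.dirac (s i)

/-- Law of `n` i.i.d. samples from `P`. -/
def samples {d : ℕ} (n : ℕ) (P : Measure (Euc d)) : Measure (Fin n → Euc d) :=
  Measure.pi fun _ => P

/-- 1-Wasserstein distance. -/
def W1 {d : ℕ} (μ ν : Measure (Euc d)) : ℝ :=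
  sInf {c | ∃ γ : Measure (Euc d × Euc d),
    γ.map Prod.fst = μ ∧ γ.map Prod.snd = ν ∧ c = ∫ p, ‖p.1 - p.2‖ ∂γ}

/-- Squared 2-Wasserstein distance. -/
def W2sq {d : ℕ} (μ ν : Measure (Euc d)) : ℝ :=
  sInf {c | ∃ γ : Measure (Euc d × Euc d),
    γ.map Prod.fst = μ ∧ γ.map Prod.snd = ν ∧ c = ∫ p, ‖p.1 - p.2‖ ^ 2 ∂γ}

/-- Total variation distance. -/
def tvDist {d : ℕ} (μ ν : Measure (Euc d)) : ℝ :=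
  sSup {c | ∃ A : Set (Euc d), MeasurableSet A ∧ c = |(μ A).toReal - (ν A).toReal|}

/-- χ²-divergence `∫ (dμ/dν - 1)² dν`. -/
def chiSq {α : Type*} [MeasurableSpace α] (μ ν : Measure α) : ℝ≥0∞ :=
  ∫⁻ x, ENNReal.ofReal (((μ.rnDeriv ν x).toReal - 1) ^ 2) ∂ν

/-- Kullback-Leibler divergence `∫ log(dμ/dν) dμ` (real-valued). -/
def klDivR {α : Type*} [MeasurableSpace α] (μ ν : Measure α) : ℝ :=
  ∫ x, Real.log ((μ.rnDeriv ν x).toReal) ∂μ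

/-- Differential entropy `-∫ log(dμ/dx) dμ`. -/
def diffEnt {d : ℕ} (μ : Measure (Euc d)) : ℝ :=
  -∫ x, Real.log ((μ.rnDeriv volume x).toReal) ∂μ

/-- Joint law of `(S, S + Z)` with `S ~ P`, `Z ~ N(0, σ² I_d)` independent. -/
def jointSY {d : ℕ} (P : Measure (Euc d)) (σ : ℝ) : Measure (Euc d × Euc d) :=
  (P.prod (gaussian d σ)).map fun p => (p.1, p.1 + p.2)

/-- χ² mutual information `I_{χ²}(S; S+Z) = χ²(P_{S,Y} ‖ P_S ⊗ P_Y)`. -/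
def chiMI {d : ℕ} (P : Measure (Euc d)) (σ : ℝ) : ℝ≥0∞ :=
  chiSq (jointSY P σ) (P.prod (mconv P (gaussian d σ)))


namespace ChiAux

variable {d : ℕ} {σ : ℝ}

/-- The Gaussian density as an `ℝ≥0∞`-valued function. -/
def gE (d : ℕ) (σ : ℝ) (x : Euc d) : ℝ≥0∞ := ENNReal.ofReal (gaussDensity d σ x)

lemma gaussian_eq : gaussian d σ = volume.withDensity (gE d σ) := rfl

lemma continuous_gaussDensity : Continuous (gaussDensity d σ) := by
  unfold gaussDensity; fun_prop

lemma measurable_gE : Measurable (gE d σ) :=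
  ENNReal.measurable_ofReal.comp continuous_gaussDensity.measurable

lemma gaussDensity_pos (hσ : 0 < σ) (x : Euc d) : 0 < gaussDensity d σ x :=
  mul_pos (Real.rpow_pos_of_pos (by positivity) _) (Real.exp_pos _)

lemma gE_ne_zero (hσ : 0 < σ) (x : Euc d) : gE d σ x ≠ 0 :=
  (ENNReal.ofReal_pos.mpr (gaussDensity_pos hσ x)).ne'

lemma gE_ne_top (x : Euc d) : gE d σ x ≠ ∞ := ENNReal.ofReal_ne_top

/-- The normalizing constant bound. -/
def Cg (d : ℕ) (σ : ℝ) : ℝ≥0∞ := ENNReal.ofReal ((2 * π * σ ^ 2) ^ (-(d : ℝ) / 2))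

lemma gE_le (hσ : 0 < σ) (x : Euc d) : gE d σ x ≤ Cg d σ := by
  refine ENNReal.ofReal_le_ofReal ?_
  unfold gaussDensity
  have h1 : Real.exp (-‖x‖ ^ 2 / (2 * σ ^ 2)) ≤ 1 := by
    rw [Real.exp_le_one_iff]
    apply div_nonpos_of_nonpos_of_nonneg
    · simp only [neg_nonpos]; positivity
      --  ‖x‖
    · positivity
  have h2 : (0:ℝ) < (2 * π * σ ^ 2) ^ (-(d : ℝ) / 2) :=
    Real.rpow_pos_of_pos (by positivity) _
  nlinarith

lemma Cg_ne_top : Cg d σ ≠ ∞ := ENNReal.ofReal_ne_top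

/-- Kernel-smoothed density `z ↦ ∫ φ_σ(z - x) dμ(x)`. -/
def q (σ : ℝ) (μ : Measure (Euc d)) (z : Euc d) : ℝ≥0∞ := ∫⁻ x, gE d σ (z - x) ∂μ

lemma measurable_q (μ : Measure (Euc d)) [SFinite μ] : Measurable (q σ μ) :=
  Measurable.lintegral_prod_right' (f := fun p : Euc d × Euc d => gE d σ (p.1 - p.2))
    (measurable_gE.comp (measurable_fst.sub measurable_snd))

lemma q_le (hσ : 0 < σ) (μ : Measure (Euc d)) (z : Euc d) :
    q σ μ z ≤ Cg d σ * μ Set.univ := by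
  calc q σ μ z ≤ ∫⁻ _, Cg d σ ∂μ := lintegral_mono fun x => gE_le hσ _
  _ = Cg d σ * μ Set.univ := lintegral_const _

lemma q_ne_top (hσ : 0 < σ) (μ : Measure (Euc d)) [IsFiniteMeasure μ] (z : Euc d) :
    q σ μ z ≠ ∞ :=
  ((q_le hσ μ z).trans_lt (ENNReal.mul_lt_top Cg_ne_top.lt_top (measure_ne_top μ _).lt_top)).ne

lemma q_ne_zero (hσ : 0 < σ) (P : Measure (Euc d)) [IsProbabilityMeasure P] (z : Euc d) :
    q σ P z ≠ 0 := by
  have hm : Measurable fun x => gE d σ (z - x) :=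
    measurable_gE.comp (measurable_const.sub measurable_id)
  have : 0 < q σ P z := by
    rw [q, lintegral_pos_iff_support hm]
    have : Function.support (fun x => gE d σ (z - x)) = Set.univ :=
      Set.eq_univ_of_forall fun x => gE_ne_zero hσ _
    rw [this]
    simp
  exact this.ne'


section MeasureLemmas

/-- Pushforward of a `withDensity` under a measurable equivalence. -/
lemma map_equiv_withDensity {α β : Type*} [MeasurableSpace α] [MeasurableSpace β] (e : α ≃ᵐ β)
    (μ : Measure α) {f : β → ℝ≥0∞} (hf : Measurable f) :
    (μ.withDensity (f ∘ e)).map e = (μ.map e).withDensity f := by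
  ext A hA
  rw [Measure.map_apply e.measurable hA, withDensity_apply _ hA,
    withDensity_apply _ (e.measurable hA), setLIntegral_map hA hf e.measurable]
  rfl

/-- Product with a `withDensity` measure as a density over the product. -/
lemma prod_withDensity (μ : Measure (Euc d)) [SigmaFinite μ] {f : Euc d → ℝ≥0∞}
    (hf : Measurable f) (hft : ∀ x, f x ≠ ∞) :
    μ.prod (volume.withDensity f) = (μ.prod volume).withDensity (fun p => f p.2) := by
  haveI : SigmaFinite (volume.withDensity f) := SigmaFinite.withDensity_of_ne_top' hft
  refine Measure.prod_eq fun A B hA hB => ?_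
  rw [withDensity_apply _ (hA.prod hB), ← Measure.prod_restrict,
    lintegral_prod _ ((show Measurable fun p : Euc d × Euc d => f p.2 from hf.comp measurable_snd).aemeasurable)]
  have h1 : ∀ x : Euc d, ∫⁻ y, f y ∂(volume.restrict B) = volume.withDensity f B := by
    intro x; rw [withDensity_apply _ hB]
  simp_rw [h1 (0 : Euc d)]
  rw [lintegral_const]
  simp [mul_comm]

lemma shear_eq (hσ : 0 < σ) (μ : Measure (Euc d)) [SigmaFinite μ] :
    (μ.prod (gaussian d σ)).map (fun p : Euc d × Euc d => (p.1, p.1 + p.2))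
      = (μ.prod volume).withDensity (fun p => gE d σ (p.2 - p.1)) := by
  have hcoe : (fun p : Euc d × Euc d => (p.1, p.1 + p.2))
      = ⇑(MeasurableEquiv.shearAddRight (Euc d)) := rfl
  have hdens : (fun p : Euc d × Euc d => gE d σ p.2)
      = (fun p : Euc d × Euc d => gE d σ (p.2 - p.1)) ∘ ⇑(MeasurableEquiv.shearAddRight (Euc d)) := by
    funext p
    simp [MeasurableEquiv.shearAddRight, Equiv.prodShear]
  rw [gaussian_eq, prod_withDensity μ measurable_gE (fun x => gE_ne_top x), hcoe, hdens,
    map_equiv_withDensity _ _ (show Measurable fun p : Euc d × Euc d => gE d σ (p.2 - p.1) from measurable_gE.comp (measurable_snd.sub measurable_fst))]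
  congr 1
  rw [← hcoe]
  exact (measurePreserving_prod_add μ volume).map_eq

lemma joint_eq (hσ : 0 < σ) (P : Measure (Euc d)) [SigmaFinite P] :
    jointSY P σ = (P.prod volume).withDensity (fun p => gE d σ (p.2 - p.1)) := by
  rw [jointSY, shear_eq hσ]

lemma map_snd_withDensity (μ : Measure (Euc d)) [SFinite μ] {h : Euc d × Euc d → ℝ≥0∞}
    (hh : Measurable h) :
    ((μ.prod volume).withDensity h).map Prod.snd
      = volume.withDensity (fun y => ∫⁻ x, h (x, y) ∂μ) := by
  ext A hA
  rw [Measure.map_apply measurable_snd hA, withDensity_apply _ (measurable_snd hA),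
    withDensity_apply _ hA]
  have hpre : (Prod.snd : Euc d × Euc d → Euc d) ⁻¹' A = (Set.univ : Set (Euc d)) ×ˢ A := by
    ext p; simp
  rw [hpre, ← Measure.prod_restrict, Measure.restrict_univ,
    lintegral_prod_symm _ hh.aemeasurable]

lemma conv_eq (hσ : 0 < σ) (μ : Measure (Euc d)) [SigmaFinite μ] :
    mconv μ (gaussian d σ) = volume.withDensity (q σ μ) := by
  have h1 : (fun p : Euc d × Euc d => p.1 + p.2)
      = Prod.snd ∘ (fun p : Euc d × Euc d => (p.1, p.1 + p.2)) := rfl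
  rw [mconv, h1, ← Measure.map_map measurable_snd (show Measurable (fun p : Euc d × Euc d => (p.1, p.1 + p.2)) from measurable_fst.prodMk (measurable_fst.add measurable_snd)),
    shear_eq hσ, map_snd_withDensity μ (show Measurable fun p : Euc d × Euc d => gE d σ (p.2 - p.1) from measurable_gE.comp (measurable_snd.sub measurable_fst))]
  rfl


/-- Radon–Nikodym derivative between two `withDensity` measures. -/
lemma chiSq_withDensity {α : Type*} [MeasurableSpace α] (m : Measure α) [SigmaFinite m]
    {p r : α → ℝ≥0∞} (hp : Measurable p) (hr : Measurable r)
    (hp0 : ∀ z, p z ≠ 0) (hpt : ∀ z, p z ≠ ∞) (hrt : ∀ z, r z ≠ ∞) :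
    chiSq (m.withDensity r) (m.withDensity p)
      = ∫⁻ z, p z * ENNReal.ofReal (((r z / p z).toReal - 1) ^ 2) ∂m := by
  haveI : SigmaFinite (m.withDensity p) := SigmaFinite.withDensity_of_ne_top' hpt
  have hmeq : m.withDensity r = (m.withDensity p).withDensity (fun z => r z / p z) := by
    rw [← withDensity_mul _ hp (g := fun z => r z / p z) (hr.div hp)]
    congr 1
    funext z
    exact (ENNReal.mul_div_cancel' (fun h => absurd h (hp0 z)) (fun h => absurd h (hpt z))).symm
  have hrn : (m.withDensity r).rnDeriv (m.withDensity p)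
      =ᵐ[m.withDensity p] fun z => r z / p z := by
    rw [hmeq]
    exact Measure.rnDeriv_withDensity _ (hr.div hp)
  rw [chiSq, lintegral_congr_ae (by filter_upwards [hrn] with z hz; rw [hz]),
    lintegral_withDensity_eq_lintegral_mul _ hp
      (g := fun z => ENNReal.ofReal (((r z / p z).toReal - 1) ^ 2)) (((hr.div hp).ennreal_toReal.sub measurable_const).pow_const 2).ennreal_ofReal]
  rfl

section PiLemmas

variable {E : Type*} [MeasurableSpace E] (P : Measure E) [IsProbabilityMeasure P] {n : ℕ}

lemma map_eval (i : Fin n) :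
    (Measure.pi fun _ : Fin n => P).map (fun s => s i) = P := by
  ext A hA
  rw [Measure.map_apply (measurable_pi_apply i) hA]
  have hpre : (fun s : Fin n → E => s i) ⁻¹' A
      = Set.pi Set.univ (Function.update (fun _ => Set.univ) i A) := by
    ext s
    simp only [Set.mem_preimage, Set.mem_univ_pi, Function.update_apply]
    constructor
    · intro h j
      by_cases hj : j = i
      · subst hj; simpa using h
      · simp [hj]
    · intro h
      have := h i
      simpa using this
  rw [hpre, Measure.pi_pi,
    Finset.prod_eq_single i (fun b _ hb => by simp [Function.update_of_ne hb]) (by simp)]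
  simp

lemma map_eval_pair {i j : Fin n} (hij : i ≠ j) :
    (Measure.pi fun _ : Fin n => P).map (fun s => (s i, s j)) = P.prod P := by
  refine (Measure.prod_eq fun A B hA hB => ?_).symm
  rw [Measure.map_apply ((measurable_pi_apply i).prodMk (measurable_pi_apply j)) (hA.prod hB)]
  have hpre : (fun s : Fin n → E => (s i, s j)) ⁻¹' (A ×ˢ B)
      = Set.pi Set.univ
        (Function.update (Function.update (fun _ => Set.univ) i A) j B) := by
    ext s
    simp only [Set.mem_preimage, Set.mem_prod, Set.mem_univ_pi, Function.update_apply]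
    constructor
    · rintro ⟨h1, h2⟩ k
      by_cases hk : k = j
      · simp [hk, h2]
      · by_cases hk2 : k = i
        · simp [hk2, hij, h1]
        · simp [hk, hk2]
    · intro h
      constructor
      · have := h i
        simpa [hij] using this
      · have := h j
        simpa using this
  rw [hpre, Measure.pi_pi]
  have hfun : (fun k : Fin n => P (Function.update (Function.update (fun _ => Set.univ) i A) j B k))
      = Function.update (Function.update (fun _ => (1 : ℝ≥0∞)) i (P A)) j (P B) := by
    funext k
    simp only [Function.update_apply]
    split_ifs <;> simp
  rw [hfun, Finset.prod_update_of_mem (Finset.mem_univ j),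
    Finset.prod_eq_single i (fun b _ hb => Function.update_of_ne hb _ _)
      (fun h => absurd (by simp [hij]) h)]
  simp [mul_comm]

end PiLemmas

end MeasureLemmas


section Core

variable {E : Type*} [MeasurableSpace E] {P : Measure E} [IsProbabilityMeasure P] {n : ℕ}

lemma integrable_mul_of_memL2 {f g : E → ℝ} (hf : MemLp f 2 P) (hg : MemLp g 2 P) :
    Integrable (fun x => f x * g x) P := by
  refine Integrable.mono' (((hf.integrable_sq.add hg.integrable_sq).div_const 2))
    (hf.aestronglyMeasurable.mul hg.aestronglyMeasurable) (ae_of_all _ fun x => ?_)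
  simp only [Pi.add_apply, Real.norm_eq_abs, abs_mul]
  have h2 : 2 * |f x| * |g x| ≤ |f x| ^ 2 + |g x| ^ 2 := two_mul_le_add_sq _ _
  have e1 := sq_abs (f x)
  have e2 := sq_abs (g x)
  nlinarith [abs_nonneg (f x), abs_nonneg (g x)]

lemma aux_sq_memL2 {α : Type*} [MeasurableSpace α] {ν : Measure α} [IsFiniteMeasure ν]
    {f : α → ℝ} (hf : Measurable f)
    (h : ∫⁻ x, ENNReal.ofReal ((f x - 1) ^ 2) ∂ν ≠ ∞) : MemLp f 2 ν := by
  have hint : Integrable (fun x => (f x - 1) ^ 2) ν := by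
    refine ⟨((hf.sub measurable_const).pow_const 2).aestronglyMeasurable, ?_⟩
    rw [HasFiniteIntegral]
    have : ∀ x, ‖(f x - 1) ^ 2‖ₑ = ENNReal.ofReal ((f x - 1) ^ 2) := fun x =>
      Real.enorm_eq_ofReal (sq_nonneg _)
    simp_rw [this]
    exact h.lt_top
  have h1 : MemLp (fun x => f x - 1) 2 ν :=
    (memLp_two_iff_integrable_sq ((hf.sub measurable_const).aestronglyMeasurable)).mpr hint
  have h2 := h1.add (memLp_const (1 : ℝ))
  have h3 : ((fun x => f x - 1) + fun _ => (1 : ℝ)) = f := by funext x; simp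
  rwa [h3] at h2

lemma memL2_comp_eval {v : E → ℝ} (hv : MemLp v 2 P) (hvm : Measurable v) (i : Fin n) :
    MemLp (fun s : Fin n → E => v (s i)) 2 (Measure.pi fun _ : Fin n => P) := by
  have h := (map_eval P i).symm ▸ hv
  exact (memLp_map_measure_iff (by rw [map_eval P i]; exact hvm.aestronglyMeasurable)
    (measurable_pi_apply i).aemeasurable).mp h

lemma integral_comp_eval {v : E → ℝ} (hvm : Measurable v) (i : Fin n) :
    ∫ s, v (s i) ∂(Measure.pi fun _ : Fin n => P) = ∫ x, v x ∂P := by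
  rw [← map_eval P i, integral_map (measurable_pi_apply i).aemeasurable]
  rw [map_eval P i]
  exact hvm.aestronglyMeasurable

lemma integral_comp_pair {v w : E → ℝ} (hvm : Measurable v) (hwm : Measurable w)
    {i j : Fin n} (hij : i ≠ j) :
    ∫ s, v (s i) * w (s j) ∂(Measure.pi fun _ : Fin n => P)
      = (∫ x, v x ∂P) * (∫ x, w x ∂P) := by
  have h1 : ∫ s, v (s i) * w (s j) ∂(Measure.pi fun _ : Fin n => P)
      = ∫ p : E × E, v p.1 * w p.2 ∂(P.prod P) := by
    rw [← map_eval_pair P hij, integral_map ((measurable_pi_apply i).prodMk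
      (measurable_pi_apply j)).aemeasurable]
    rw [map_eval_pair P hij]
    exact (hvm.comp measurable_fst).aestronglyMeasurable.mul
      (hwm.comp measurable_snd).aestronglyMeasurable
  rw [h1, integral_prod_mul]

/-- The key variance identity for i.i.d. averages. -/
lemma core_variance (hn : 1 ≤ n) {t : E → ℝ} (ht : Measurable t) (ht0 : ∀ x, 0 ≤ t x)
    (hti : ∫ x, t x ∂P = 1) (htint : Integrable t P) :
    ∫⁻ s, ENNReal.ofReal (((n : ℝ)⁻¹ * ∑ i, t (s i) - 1) ^ 2)
        ∂(Measure.pi fun _ : Fin n => P)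
      = (n : ℝ≥0∞)⁻¹ * ∫⁻ x, ENNReal.ofReal ((t x - 1) ^ 2) ∂P := by
  have hn0 : (n : ℝ) ≠ 0 := Nat.cast_ne_zero.mpr (by omega)
  set Pn := (Measure.pi fun _ : Fin n => P) with hPn
  haveI : IsProbabilityMeasure Pn := by rw [hPn]; infer_instance
  obtain ⟨v, hv⟩ : ∃ v : E → ℝ, v = fun x => t x - 1 := ⟨_, rfl⟩
  have hvm : Measurable v := by rw [hv]; exact ht.sub measurable_const
  have hveq : ∀ s : Fin n → E,
      (n : ℝ)⁻¹ * ∑ i, t (s i) - 1 = (n : ℝ)⁻¹ * ∑ i, v (s i) := by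
    intro s
    rw [hv]
    simp only [Finset.sum_sub_distrib, Finset.sum_const, Finset.card_univ,
      Fintype.card_fin, nsmul_eq_mul, mul_one]
    rw [mul_sub, inv_mul_cancel₀ hn0]
  have hvint : ∫ x, v x ∂P = 0 := by
    rw [hv, integral_sub htint (integrable_const 1)]
    simp [hti]
  by_cases hL2 : MemLp t 2 P
  · -- finite-variance case
    have hv2 : MemLp v 2 P := by rw [hv]; exact hL2.sub (memLp_const 1)
    have hVi : ∀ i : Fin n, MemLp (fun s : Fin n → E => v (s i)) 2 Pn :=
      fun i => memL2_comp_eval hv2 hvm i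
    have hVsum : MemLp (fun s : Fin n → E => ∑ i, v (s i)) 2 Pn := by
      have h0 := memLp_finset_sum' (μ := Pn) (p := 2)
        (f := fun (i : Fin n) (s : Fin n → E) => v (s i)) Finset.univ
        (fun i _ => hVi i)
      have h1 : (∑ i : Fin n, fun s : Fin n → E => v (s i))
          = fun s : Fin n → E => ∑ i, v (s i) := by
        funext s; simp
      rwa [h1] at h0
    have hT : MemLp (fun s : Fin n → E => (n : ℝ)⁻¹ * ∑ i, v (s i)) 2 Pn :=
      hVsum.const_mul _
    -- the real-integral computation
    have hmul : ∀ i j : Fin n,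
        Integrable (fun s : Fin n → E => v (s i) * v (s j)) Pn :=
      fun i j => integrable_mul_of_memL2 (hVi i) (hVi j)
    have hIij : ∀ i j : Fin n, ∫ s, v (s i) * v (s j) ∂Pn
        = if i = j then ∫ x, v x * v x ∂P else 0 := by
      intro i j
      by_cases hij : i = j
      · subst hij
        simp only [if_pos rfl]
        exact integral_comp_eval (v := fun x => v x * v x) (hvm.mul hvm) i
      · rw [if_neg hij, integral_comp_pair hvm hvm hij, hvint, mul_zero]
    have hsum : ∫ s, ((n : ℝ)⁻¹ * ∑ i, v (s i)) ^ 2 ∂Pn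
        = (n : ℝ)⁻¹ * ∫ x, v x * v x ∂P := by
      have hexp : ∀ s : Fin n → E, ((n : ℝ)⁻¹ * ∑ i, v (s i)) ^ 2
          = (n : ℝ)⁻¹ ^ 2 * ∑ i : Fin n, ∑ j : Fin n, v (s i) * v (s j) := by
        intro s
        rw [mul_pow, sq (∑ i, v (s i)), Finset.sum_mul_sum]
      simp_rw [hexp]
      rw [integral_const_mul,
        integral_finset_sum _ (fun i _ => integrable_finset_sum _ fun j _ => hmul i j)]
      have : ∀ i : Fin n, ∫ s, ∑ j : Fin n, v (s i) * v (s j) ∂Pn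
          = ∫ x, v x * v x ∂P := by
        intro i
        rw [integral_finset_sum _ (fun j _ => hmul i j)]
        simp_rw [hIij i]
        rw [Finset.sum_ite_eq Finset.univ i fun _ => ∫ x, v x * v x ∂P]
        simp
      simp_rw [this]
      rw [Finset.sum_const, Finset.card_univ, Fintype.card_fin, nsmul_eq_mul]
      field_simp
    -- convert both sides to real integrals
    have hTint : Integrable (fun s : Fin n → E => ((n : ℝ)⁻¹ * ∑ i, v (s i)) ^ 2) Pn :=
      hT.integrable_sq
    calc ∫⁻ s, ENNReal.ofReal (((n : ℝ)⁻¹ * ∑ i, t (s i) - 1) ^ 2) ∂Pn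
        = ∫⁻ s, ENNReal.ofReal (((n : ℝ)⁻¹ * ∑ i, v (s i)) ^ 2) ∂Pn := by
          apply lintegral_congr fun s => by rw [hveq s]
      _ = ENNReal.ofReal (∫ s, ((n : ℝ)⁻¹ * ∑ i, v (s i)) ^ 2 ∂Pn) :=
          (ofReal_integral_eq_lintegral_ofReal hTint (ae_of_all _ fun s => sq_nonneg _)).symm
      _ = ENNReal.ofReal ((n : ℝ)⁻¹ * ∫ x, v x * v x ∂P) := by rw [hsum]
      _ = ENNReal.ofReal ((n : ℝ)⁻¹) * ENNReal.ofReal (∫ x, v x * v x ∂P) :=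
          ENNReal.ofReal_mul (by positivity)
      _ = (n : ℝ≥0∞)⁻¹ * ∫⁻ x, ENNReal.ofReal ((t x - 1) ^ 2) ∂P := by
          congr 1
          · rw [ENNReal.ofReal_inv_of_pos (by exact_mod_cast Nat.pos_of_ne_zero (by omega)),
              ENNReal.ofReal_natCast]
          · rw [ofReal_integral_eq_lintegral_ofReal
              (by simpa [sq] using hv2.integrable_sq) (ae_of_all _ fun x => mul_self_nonneg _)]
            apply lintegral_congr fun x => by rw [hv]; ring_nf
  · -- infinite-variance case: both sides are `∞`
    have hRHS : ∫⁻ x, ENNReal.ofReal ((t x - 1) ^ 2) ∂P = ∞ := by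
      by_contra h
      exact hL2 (aux_sq_memL2 ht h)
    have hLHS : ∫⁻ s, ENNReal.ofReal (((n : ℝ)⁻¹ * ∑ i, t (s i) - 1) ^ 2) ∂Pn = ∞ := by
      by_contra h
      have hTm : Measurable fun s : Fin n → E => (n : ℝ)⁻¹ * ∑ i, t (s i) :=
        (Finset.measurable_sum _ fun i _ => ht.comp (measurable_pi_apply i)).const_mul _
      have hT2 : MemLp (fun s : Fin n → E => (n : ℝ)⁻¹ * ∑ i, t (s i)) 2 Pn :=
        aux_sq_memL2 hTm h
      set i0 : Fin n := ⟨0, by omega⟩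
      have hbd : ∀ s : Fin n → E,
          ‖t (s i0)‖ ≤ ‖(n : ℝ) * ((n : ℝ)⁻¹ * ∑ i, t (s i))‖ := by
        intro s
        have h1 : t (s i0) ≤ ∑ i, t (s i) :=
          Finset.single_le_sum (fun i _ => ht0 (s i)) (Finset.mem_univ i0)
        have h2 : (n : ℝ) * ((n : ℝ)⁻¹ * ∑ i, t (s i)) = ∑ i, t (s i) := by
          field_simp
        rw [Real.norm_eq_abs, Real.norm_eq_abs, abs_of_nonneg (ht0 _), h2]
        exact h1.trans (le_abs_self _)
      have hcomp : MemLp (fun s : Fin n → E => t (s i0)) 2 Pn :=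
        MemLp.of_le (hT2.const_mul (n : ℝ))
          (ht.comp (measurable_pi_apply i0)).aestronglyMeasurable (ae_of_all _ hbd)
      have : MemLp t 2 ((Measure.pi fun _ : Fin n => P).map (fun s => s i0)) := by
        refine (memLp_map_measure_iff ?_ (measurable_pi_apply i0).aemeasurable).mpr hcomp
        rw [map_eval P i0]
        exact ht.aestronglyMeasurable
      rw [map_eval P i0] at this
      exact hL2 this
    rw [hLHS, hRHS, ENNReal.mul_top]
    simp

end Core


section TLemmas

variable {d : ℕ} {σ : ℝ}

lemma measurable_tz (z : Euc d) (P : Measure (Euc d)) :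
    Measurable fun x : Euc d => (gE d σ (z - x) / q σ P z).toReal :=
  ((measurable_gE.comp (measurable_const.sub measurable_id)).div
    measurable_const).ennreal_toReal

lemma t_integrable (hσ : 0 < σ) (P : Measure (Euc d)) [IsProbabilityMeasure P] (z : Euc d) :
    Integrable (fun x => (gE d σ (z - x) / q σ P z).toReal) P := by
  refine Integrable.mono' (integrable_const ((Cg d σ / q σ P z).toReal))
    (measurable_tz z P).aestronglyMeasurable (ae_of_all _ fun x => ?_)
  rw [Real.norm_eq_abs, abs_of_nonneg ENNReal.toReal_nonneg]
  apply ENNReal.toReal_mono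
  · exact (ENNReal.div_lt_top Cg_ne_top (q_ne_zero hσ P z)).ne
  · exact ENNReal.div_le_div_right (gE_le hσ _) _

lemma t_integral_one (hσ : 0 < σ) (P : Measure (Euc d)) [IsProbabilityMeasure P] (z : Euc d) :
    ∫ x, (gE d σ (z - x) / q σ P z).toReal ∂P = 1 := by
  rw [integral_toReal
    (show Measurable fun x : Euc d => gE d σ (z - x) / q σ P z from
      (measurable_gE.comp (measurable_const.sub measurable_id)).div
        measurable_const).aemeasurable
    (ae_of_all _ fun x => ENNReal.div_lt_top (gE_ne_top _) (q_ne_zero hσ P z))]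
  have h1 : ∫⁻ x, gE d σ (z - x) / q σ P z ∂P = q σ P z * (q σ P z)⁻¹ := by
    simp_rw [div_eq_mul_inv]
    rw [lintegral_mul_const' _ _ (ENNReal.inv_ne_top.mpr (q_ne_zero hσ P z))]
    rfl
  rw [h1, ENNReal.mul_inv_cancel (q_ne_zero hσ P z) (q_ne_top hσ P z)]
  simp

lemma empMeasure_isFiniteMeasure {n : ℕ} (hn : 1 ≤ n) (s : Fin n → Euc d) :
    IsFiniteMeasure (empMeasure s) := by
  constructor
  rw [empMeasure]
  simp only [Measure.smul_apply, smul_eq_mul, Measure.coe_finset_sum, Finset.sum_apply,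
    Measure.dirac_apply_of_mem (Set.mem_univ _), Finset.sum_const, Finset.card_univ,
    Fintype.card_fin, nsmul_eq_mul, mul_one]
  rw [ENNReal.inv_mul_cancel (Nat.cast_ne_zero.mpr (by omega)) (ENNReal.natCast_ne_top n)]
  exact ENNReal.one_lt_top

lemma q_emp {n : ℕ} (s : Fin n → Euc d) (z : Euc d) :
    q σ (empMeasure s) z = (n : ℝ≥0∞)⁻¹ * ∑ i, gE d σ (z - s i) := by
  rw [q, empMeasure, lintegral_smul_measure, lintegral_finset_sum_measure]
  congr 1
  exact Finset.sum_congr rfl fun i _ =>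
    lintegral_dirac' _ (measurable_gE.comp (measurable_const.sub measurable_id))

lemma toReal_emp {n : ℕ} (s : Fin n → Euc d) (z : Euc d) (P : Measure (Euc d)) :
    (((n : ℝ≥0∞)⁻¹ * ∑ i, gE d σ (z - s i)) / q σ P z).toReal
      = (n : ℝ)⁻¹ * ∑ i, (gE d σ (z - s i) / q σ P z).toReal := by
  rw [ENNReal.toReal_div, ENNReal.toReal_mul, ENNReal.toReal_inv, ENNReal.toReal_natCast,
    ENNReal.toReal_sum (fun i _ => gE_ne_top _), mul_div_assoc, Finset.sum_div]
  congr 1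
  exact Finset.sum_congr rfl fun i _ => (ENNReal.toReal_div _ _).symm

end TLemmas

end ChiAux

/-- **χ²-divergence and mutual information.**
`E[χ²(P̂ₙ ∗ N_σ ‖ P ∗ N_σ)] = I_{χ²}(S; Y) / n`. -/


theorem chiSq_empirical_eq_chiMI (d n : ℕ) (hn : 1 ≤ n) (σ : ℝ) (hσ : 0 < σ)
    (P : Measure (Euc d)) [IsProbabilityMeasure P] :
    ∫⁻ s, chiSq (mconv (empMeasure s) (gaussian d σ)) (mconv P (gaussian d σ)) ∂(samples n P)
      = chiMI P σ / n := by
  classical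
  open ChiAux in
  have hq0 : ∀ z, q σ P z ≠ 0 := q_ne_zero hσ P
  have hqt : ∀ z, q σ P z ≠ ∞ := q_ne_top hσ P
  have hqm : Measurable (q σ P) := measurable_q P
  haveI : IsProbabilityMeasure (samples n P) := by
    rw [samples]; infer_instance
  have hnne : ((n : ℝ≥0∞))⁻¹ ≠ ∞ :=
    ENNReal.inv_ne_top.mpr (Nat.cast_ne_zero.mpr (by omega))
  -- the function under the double integral
  set m : Euc d → ℝ≥0∞ :=
    fun z => ∫⁻ x, ENNReal.ofReal (((gE d σ (z - x) / q σ P z).toReal - 1) ^ 2) ∂P with hm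
  -- Step 1: rewrite the χ²-divergence for each sample
  have hchi : ∀ s : Fin n → Euc d,
      chiSq (mconv (empMeasure s) (gaussian d σ)) (mconv P (gaussian d σ))
        = ∫⁻ z, q σ P z * ENNReal.ofReal
            (((n : ℝ)⁻¹ * ∑ i, (gE d σ (z - s i) / q σ P z).toReal - 1) ^ 2) ∂volume := by
    intro s
    haveI : IsFiniteMeasure (empMeasure s) := empMeasure_isFiniteMeasure hn s
    rw [conv_eq hσ (empMeasure s), conv_eq hσ P,
      chiSq_withDensity volume hqm (measurable_q _) hq0 hqt (q_ne_top hσ _)]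
    apply lintegral_congr fun z => ?_
    rw [q_emp s z, toReal_emp s z P]
  -- measurability for Tonelli
  have hFm : Measurable fun p : (Fin n → Euc d) × Euc d =>
      q σ P p.2 * ENNReal.ofReal
        (((n : ℝ)⁻¹ * ∑ i, (gE d σ (p.2 - p.1 i) / q σ P p.2).toReal - 1) ^ 2) := by
    apply (hqm.comp measurable_snd).mul
    apply Measurable.ennreal_ofReal
    apply Measurable.pow_const
    apply Measurable.sub _ measurable_const
    apply Measurable.const_mul
    apply Finset.measurable_sum
    intro i _
    exact ((measurable_gE.comp (measurable_snd.sub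
      ((measurable_pi_apply i).comp measurable_fst))).div
      (hqm.comp measurable_snd)).ennreal_toReal
  -- Step 2: Tonelli and the variance identity
  have hswap : ∫⁻ s, chiSq (mconv (empMeasure s) (gaussian d σ)) (mconv P (gaussian d σ))
        ∂(samples n P)
      = ∫⁻ z, q σ P z * ((n : ℝ≥0∞)⁻¹ * m z) ∂volume := by
    rw [lintegral_congr hchi, lintegral_lintegral_swap hFm.aemeasurable]
    apply lintegral_congr fun z => ?_
    have hmz : Measurable fun s : Fin n → Euc d => ENNReal.ofReal
        (((n : ℝ)⁻¹ * ∑ i, (gE d σ (z - s i) / q σ P z).toReal - 1) ^ 2) := by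
      apply Measurable.ennreal_ofReal
      apply Measurable.pow_const
      apply Measurable.sub _ measurable_const
      apply Measurable.const_mul
      exact Finset.measurable_sum _ fun i _ =>
        (measurable_tz z P).comp (measurable_pi_apply i)
    rw [lintegral_const_mul _ hmz]
    congr 1
    have hcore := core_variance (P := P) hn (measurable_tz (σ := σ) z P)
      (fun x => ENNReal.toReal_nonneg) (t_integral_one hσ P z) (t_integrable hσ P z)
    rw [samples]
    exact hcore
  -- Step 3: identify the χ² mutual information
  have hchiMI : chiMI P σ = ∫⁻ z, q σ P z * m z ∂volume := by
    rw [chiMI, joint_eq hσ P, conv_eq hσ P, prod_withDensity P hqm hqt,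
      chiSq_withDensity (P.prod volume)
        (show Measurable fun p : Euc d × Euc d => q σ P p.2 from hqm.comp measurable_snd)
        (show Measurable fun p : Euc d × Euc d => gE d σ (p.2 - p.1) from
          measurable_gE.comp (measurable_snd.sub measurable_fst))
        (fun p => hq0 p.2) (fun p => hqt p.2) (fun p => gE_ne_top _),
      lintegral_prod_symm _ (by
        apply Measurable.aemeasurable
        apply ((hqm.comp measurable_snd).mul _ : Measurable fun p : Euc d × Euc d =>
          q σ P p.2 * ENNReal.ofReal (((gE d σ (p.2 - p.1) / q σ P p.2).toReal - 1) ^ 2))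
        exact (((measurable_gE.comp (measurable_snd.sub measurable_fst)).div
          (hqm.comp measurable_snd)).ennreal_toReal.sub
          measurable_const).pow_const 2 |>.ennreal_ofReal)]
    apply lintegral_congr fun z => ?_
    have hmz2 : Measurable fun x : Euc d => ENNReal.ofReal
        (((gE d σ (z - x) / q σ P z).toReal - 1) ^ 2) :=
      ((measurable_tz z P).sub measurable_const).pow_const 2 |>.ennreal_ofReal
    have hgoal : ∫⁻ x, q σ P z * ENNReal.ofReal
        (((gE d σ (z - x) / q σ P z).toReal - 1) ^ 2) ∂P = q σ P z * m z := by
      rw [lintegral_const_mul _ hmz2]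
    exact hgoal
  rw [hswap, hchiMI, ENNReal.div_eq_inv_mul, ← lintegral_const_mul' _ _ hnne]
  exact lintegral_congr fun z => mul_left_comm _ _ _
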